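/- Asian Gamma via differentiating Delta: If Δ(x) = (e^{−rT}/(σx)) E[Φ(I_{(0)}/T)(−σ + (I_{(0)}/I_{(1)}) W_T + σ I_{(0)} I_{(2)}/I_{(1)}²)], then since I_{(n)}(x) = x I_{(n)}(1) (so the ratios I_{(0)}/I_{(1)} and I_{(0)}I_{(2)}/I_{(1)}² are independent of x), Γ = ∂Δ/∂x = −Δ/x + (e^{−rT}/(σx)) E[Φ'(I_{(0)}/T)(I_{(0)}/(xT))(−σ + (I_{(0)}/I_{(1)}) W_T + σ I_{(0)} I_{(2)}/I_{(1)}²)]. -/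

import Mathlib

open MeasureTheory

/-- Asian Gamma via differentiating Delta: since `X_t(x) = x exp(X̃_t)` gives
`I_{(n)}(x) = x I_{(n)}(1)` (so the ratios `I_{(0)}/I_{(1)}` and `I_{(0)}I_{(2)}/I_{(1)}²`,
hence the Malliavin weight `w`, are independent of `x`), the Delta
`Δ(y) = (e^{−rT}/(σy)) E[Φ(I_{(0)}(y)/T) w]` satisfies
`Γ = ∂Δ/∂x = −Δ(x)/x + (e^{−rT}/(σx)) E[Φ'(I_{(0)}/T)(I_{(0)}/(xT)) w]`. -/
theorem asian_gamma_from_delta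
    {Ω : Type*} [MeasurableSpace Ω] (μ : Measure Ω) [IsProbabilityMeasure μ]
    (T r σ x : ℝ) (hT : 0 < T) (hσ : σ ≠ 0) (hx : 0 < x)
    (L : ℝ → Ω → ℝ)   -- the Lévy process X̃, so X_t(x) = x exp(X̃_t)
    (WT : Ω → ℝ)
    -- I_{(n)} at initial value 1; I_{(n)}(x) = x · Ione n
    (Ione : ℕ → Ω → ℝ)
    (hIone : ∀ n ω, Ione n ω = ∫ t in (0:ℝ)..T, t ^ n * Real.exp (L t ω))
    (hI1 : ∀ ω, Ione 1 ω ≠ 0)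
    -- the (x-independent) Malliavin weight of the Asian Delta formula
    (w : Ω → ℝ)
    (hw : ∀ ω, w ω = -σ + (Ione 0 ω / Ione 1 ω) * WT ω
      + σ * Ione 0 ω * Ione 2 ω / (Ione 1 ω) ^ 2)
    (Φ : ℝ → ℝ) (hΦ : ContDiff ℝ 1 Φ) (hΦ' : ∃ C, ∀ y, |deriv Φ y| ≤ C)
    -- integrability, justifying differentiation under the expectation
    (hIL2 : MemLp (Ione 0) 2 μ) (hwL2 : MemLp w 2 μ)
    (hint : ∀ y : ℝ, Integrable (fun ω => Φ (y * Ione 0 ω / T) * w ω) μ)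
    (hint' : Integrable (fun ω => deriv Φ (x * Ione 0 ω / T) * Ione 0 ω * w ω) μ)
    -- the Asian Delta as a function of the initial value y
    (Δ : ℝ → ℝ)
    (hΔ : ∀ y : ℝ, Δ y
      = Real.exp (-(r * T)) / (σ * y) * ∫ ω, Φ (y * Ione 0 ω / T) * w ω ∂μ) :
    deriv Δ x
      = -(Δ x) / x + Real.exp (-(r * T)) / (σ * x) *
          ∫ ω, deriv Φ (x * Ione 0 ω / T) * (x * Ione 0 ω / (x * T)) * w ω ∂μ := by
  obtain ⟨C, hC⟩ := hΦ'
  have hC0 : 0 ≤ C := (abs_nonneg _).trans (hC 0)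
  have hΦd : Differentiable ℝ Φ := hΦ.differentiable one_ne_zero
  set F : ℝ → Ω → ℝ := fun y ω => Φ (y * Ione 0 ω / T) * w ω with hF
  set F' : ℝ → Ω → ℝ := fun y ω => deriv Φ (y * Ione 0 ω / T) * (Ione 0 ω / T) * w ω
    with hF'
  -- integrability of |I0| * |w|
  have hIw : Integrable (fun ω => Ione 0 ω * w ω) μ := by
    have := (hwL2.smul hIL2 (r := 1)).integrable le_rfl
    refine this.congr (Filter.Eventually.of_forall fun ω => ?_)
    simp [Pi.smul_apply, smul_eq_mul]
  have hbound_int : Integrable (fun ω => C / T * (|Ione 0 ω| * |w ω|)) μ := by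
    have : Integrable (fun ω => |Ione 0 ω * w ω|) μ := hIw.abs
    simp_rw [abs_mul] at this
    exact this.const_mul _
  have key : HasDerivAt (fun y => ∫ ω, F y ω ∂μ) (∫ ω, F' x ω ∂μ) x := by
    refine (hasDerivAt_integral_of_dominated_loc_of_deriv_le (Metric.ball_mem_nhds x one_pos)
      (Filter.Eventually.of_forall fun y => (hint y).aestronglyMeasurable)
      (hint x) ?_ ?_ hbound_int ?_).2
    · have : AEStronglyMeasurable
          (fun ω => deriv Φ (x * Ione 0 ω / T) * Ione 0 ω * w ω) μ :=
        hint'.aestronglyMeasurable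
      have h2 := (this.const_smul (T⁻¹ : ℝ))
      refine h2.congr (Filter.Eventually.of_forall fun ω => ?_)
      simp [F', smul_eq_mul]
      ring
    · refine Filter.Eventually.of_forall fun ω y _ => ?_
      have : ‖F' y ω‖ = |deriv Φ (y * Ione 0 ω / T)| * (|Ione 0 ω| / T) * |w ω| := by
        simp [F', abs_mul, abs_div, abs_of_pos hT]
      rw [this]
      have h1 : |deriv Φ (y * Ione 0 ω / T)| * (|Ione 0 ω| / T) * |w ω|
          ≤ C * (|Ione 0 ω| / T) * |w ω| := by
        gcongr
        exact hC _
      refine h1.trans_eq ?_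
      field_simp
    · refine Filter.Eventually.of_forall fun ω y _ => ?_
      have hg : HasDerivAt (fun y : ℝ => y * Ione 0 ω / T) (Ione 0 ω / T) y := by
        simpa [mul_div_assoc] using (hasDerivAt_id y).mul_const (Ione 0 ω / T)
      have := ((hΦd _).hasDerivAt.comp y hg).mul_const (w ω)
      simpa [F', Function.comp, mul_div_assoc] using this
  -- derivative of Δ
  have hΔeq : Δ = fun y => Real.exp (-(r * T)) / σ * (y⁻¹ * ∫ ω, F y ω ∂μ) := by
    funext y
    rw [hΔ y]
    field_simp [hσ]
    rfl
  have hinv : HasDerivAt (fun y : ℝ => y⁻¹) (-(x ^ 2)⁻¹) x := hasDerivAt_inv hx.ne'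
  have hprod : HasDerivAt (fun y => y⁻¹ * ∫ ω, F y ω ∂μ)
      (-(x ^ 2)⁻¹ * (∫ ω, F x ω ∂μ) + x⁻¹ * ∫ ω, F' x ω ∂μ) x := hinv.mul key
  have hΔderiv : HasDerivAt Δ
      (Real.exp (-(r * T)) / σ *
        (-(x ^ 2)⁻¹ * (∫ ω, F x ω ∂μ) + x⁻¹ * ∫ ω, F' x ω ∂μ)) x := by
    rw [hΔeq]; exact hprod.const_mul _
  rw [hΔderiv.deriv]
  -- identify the target integral with ∫ F' x
  have hint_eq : (∫ ω, deriv Φ (x * Ione 0 ω / T) * (x * Ione 0 ω / (x * T)) * w ω ∂μ)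
      = ∫ ω, F' x ω ∂μ := by
    refine integral_congr_ae (Filter.Eventually.of_forall fun ω => ?_)
    have : x * Ione 0 ω / (x * T) = Ione 0 ω / T :=
      mul_div_mul_left _ _ hx.ne'
    simp [F', this]
  rw [hint_eq, hΔ x]
  field_simp
  ring
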